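/- Let G=(V,E,w) be a connected weighted undirected graph and k ≥ 2. Let S_1 = {u*} where u* minimizes H({u}) over u ∈ V, and for i = 2,...,k let S_i = S_{i−1} ∪ {argmax_{u∈V∖S_{i−1}} (H(S_{i−1}) − H(S_{i−1} ∪ {u}))} be the greedy sequence. Then the output S_k satisfies H({u*}) − H(S_k) ≥ (1 − (k/(k−1))·(1/e)) · (H({u*}) − H(S*)), where S* = argmin_{|S|=k} H(S). -/

import Mathlib

open Matrix BigOperators Finset

/-- Group walk centrality `H(S) = Σ_{i∈V} π_i H_{iS}`, where `HT S i = H_{iS}` is the group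
hitting time of `S` from `i`. -/
noncomputable def gwcH (n : ℕ) (p : Fin n → ℝ) (HT : Finset (Fin n) → Fin n → ℝ)
    (S : Finset (Fin n)) : ℝ :=
  ∑ i, p i * HT S i


/-- Minimum principle for functions harmonic off a nonempty boundary set. -/
lemma gwc_minprin {n : ℕ} (A : Matrix (Fin n) (Fin n) ℝ)
    (hnonneg : ∀ i j, 0 ≤ A i j)
    (hconn : ∀ i j : Fin n, ∃ p : ℕ, (A ^ p) i j ≠ 0)
    (deg : Fin n → ℝ) (hdeg : ∀ i, deg i = ∑ j, A i j)
    (hdegpos : ∀ i, 0 < deg i)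
    (W : Finset (Fin n)) (hW : W.Nonempty)
    (g : Fin n → ℝ)
    (hbd : ∀ i ∈ W, 0 ≤ g i)
    (hharm : ∀ i, i ∉ W → g i = ∑ l, (A i l / deg i) * g l) :
    ∀ i, 0 ≤ g i := by
  by_contra hcon
  push_neg at hcon
  obtain ⟨j0, hj0⟩ := hcon
  have hne : (Finset.univ : Finset (Fin n)).Nonempty := ⟨j0, Finset.mem_univ j0⟩
  obtain ⟨i0, -, hi0⟩ := Finset.exists_min_image Finset.univ g hne
  set m := g i0 with hm
  have hmneg : m < 0 := lt_of_le_of_lt (hi0 j0 (Finset.mem_univ j0)) hj0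
  have hmle : ∀ l, m ≤ g l := fun l => hi0 l (Finset.mem_univ l)
  have key : ∀ p : ℕ, ∀ l, (A ^ p) i0 l ≠ 0 → g l = m := by
    intro p
    induction p with
    | zero =>
      intro l hl
      rw [pow_zero] at hl
      by_contra hne'
      have : i0 ≠ l := fun h => hne' (h ▸ rfl)
      exact hl (Matrix.one_apply_ne this)
    | succ p ih =>
      intro l hl
      rw [pow_succ, Matrix.mul_apply] at hl
      obtain ⟨x, -, hx⟩ := Finset.exists_ne_zero_of_sum_ne_zero hl
      have hxp : (A ^ p) i0 x ≠ 0 := fun h => hx (by simp [h])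
      have hxA : A x l ≠ 0 := fun h => hx (by simp [h])
      have hgx : g x = m := ih x hxp
      have hxW : x ∉ W := by
        intro hxW
        have := hbd x hxW
        rw [hgx] at this
        linarith
      have hrec := hharm x hxW
      have hsum1 : ∑ l', A x l' / deg x = 1 := by
        rw [← Finset.sum_div, ← hdeg x]
        exact div_self (hdegpos x).ne'
      have hzero : ∑ l', (A x l' / deg x) * (g l' - m) = 0 := by
        have heq : ∑ l', (A x l' / deg x) * (g l' - m)
            = (∑ l', (A x l' / deg x) * g l') - (∑ l', A x l' / deg x) * m := by
          rw [Finset.sum_mul, ← Finset.sum_sub_distrib]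
          congr 1
          funext l'
          ring
        rw [heq, hsum1, one_mul, ← hrec, hgx, sub_self]
      have hterm : ∀ l' ∈ Finset.univ, 0 ≤ (A x l' / deg x) * (g l' - m) :=
        fun l' _ => mul_nonneg (div_nonneg (hnonneg x l') (hdegpos x).le)
          (sub_nonneg.2 (hmle l'))
      have hterm0 := (Finset.sum_eq_zero_iff_of_nonneg hterm).1 hzero l (Finset.mem_univ l)
      have hApos : 0 < A x l / deg x :=
        div_pos (lt_of_le_of_ne (hnonneg x l) (Ne.symm hxA)) (hdegpos x)
      rcases mul_eq_zero.1 hterm0 with h1 | h2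
      · exact absurd h1 hApos.ne'
      · have := sub_eq_zero.1 h2
        exact this
  obtain ⟨w, hw⟩ := hW
  obtain ⟨p, hp⟩ := hconn i0 w
  have hgw := key p w hp
  have := hbd w hw
  rw [hgw] at this
  linarith

section
variable {n : ℕ} (A : Matrix (Fin n) (Fin n) ℝ)
  (deg : Fin n → ℝ)
  (HT : Finset (Fin n) → Fin n → ℝ)

/-- Hitting times are nonnegative. -/
lemma gwc_HT_nonneg
    (hnonneg : ∀ i j, 0 ≤ A i j)
    (hdeg : ∀ i, deg i = ∑ j, A i j)
    (hdegpos : ∀ i, 0 < deg i)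
    (hHT0 : ∀ W : Finset (Fin n), W.Nonempty → ∀ i ∈ W, HT W i = 0)
    (hHTrec : ∀ W : Finset (Fin n), W.Nonempty → ∀ i, i ∉ W →
      HT W i = 1 + ∑ l, (A i l / deg i) * HT W l)
    (W : Finset (Fin n)) (hW : W.Nonempty) :
    ∀ i, 0 ≤ HT W i := by
  by_contra hcon
  push_neg at hcon
  obtain ⟨j0, hj0⟩ := hcon
  obtain ⟨i0, -, hi0⟩ := Finset.exists_min_image Finset.univ (HT W) ⟨j0, Finset.mem_univ j0⟩
  set m := HT W i0 with hm
  have hmneg : m < 0 := lt_of_le_of_lt (hi0 j0 (Finset.mem_univ j0)) hj0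
  have hi0W : i0 ∉ W := by
    intro h
    have := hHT0 W hW i0 h
    rw [← hm] at this
    linarith
  have hrec := hHTrec W hW i0 hi0W
  have hsum1 : ∑ l, A i0 l / deg i0 = 1 := by
    rw [← Finset.sum_div, ← hdeg i0]
    exact div_self (hdegpos i0).ne'
  have hsle : (∑ l, (A i0 l / deg i0) * m) ≤ ∑ l, (A i0 l / deg i0) * HT W l := by
    apply Finset.sum_le_sum
    intro l _
    exact mul_le_mul_of_nonneg_left (hi0 l (Finset.mem_univ l))
      (div_nonneg (hnonneg i0 l) (hdegpos i0).le)
  have hsm : ∑ l, (A i0 l / deg i0) * m = m := by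
    rw [← Finset.sum_mul, hsum1, one_mul]
  rw [hsm] at hsle
  linarith

end

section
variable {n : ℕ} (A : Matrix (Fin n) (Fin n) ℝ)
  (deg : Fin n → ℝ)
  (HT : Finset (Fin n) → Fin n → ℝ)
  (hnonneg : ∀ i j, 0 ≤ A i j)
  (hconn : ∀ i j : Fin n, ∃ p : ℕ, (A ^ p) i j ≠ 0)
  (hdeg : ∀ i, deg i = ∑ j, A i j)
  (hdegpos : ∀ i, 0 < deg i)
  (hHT0 : ∀ W : Finset (Fin n), W.Nonempty → ∀ i ∈ W, HT W i = 0)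
  (hHTrec : ∀ W : Finset (Fin n), W.Nonempty → ∀ i, i ∉ W →
      HT W i = 1 + ∑ l, (A i l / deg i) * HT W l)

include hnonneg hconn hdeg hdegpos hHT0 hHTrec in
/-- Pointwise monotonicity of hitting times. -/
lemma gwc_HT_mono (W W' : Finset (Fin n)) (hW : W.Nonempty) (hWW' : W ⊆ W') :
    ∀ i, HT W' i ≤ HT W i := by
  have hW' : W'.Nonempty := hW.mono hWW'
  have h := gwc_minprin A hnonneg hconn deg hdeg hdegpos W' hW'
    (fun i => HT W i - HT W' i)
    (fun i hi => by
      rw [hHT0 W' hW' i hi, sub_zero]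
      exact gwc_HT_nonneg A deg HT hnonneg hdeg hdegpos hHT0 hHTrec W hW i)
    (fun i hi => by
      have hiW : i ∉ W := fun h => hi (hWW' h)
      rw [hHTrec W hW i hiW, hHTrec W' hW' i hi]
      simp only [mul_sub]
      rw [Finset.sum_sub_distrib]
      ring)
  intro i
  have := h i
  linarith

include hnonneg hconn hdeg hdegpos hHT0 hHTrec in
/-- Pointwise supermodularity of hitting times. -/
lemma gwc_HT_supermod (W T : Finset (Fin n)) (hW : W.Nonempty) (hWT : W ⊆ T)
    (u : Fin n) (hu : u ∉ T) :
    ∀ i, HT T i - HT (insert u T) i ≤ HT W i - HT (insert u W) i := by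
  have hT : T.Nonempty := hW.mono hWT
  have hiWu : W ⊆ insert u W := Finset.subset_insert u W
  have hmono := gwc_HT_mono A deg HT hnonneg hconn hdeg hdegpos hHT0 hHTrec
  have h := gwc_minprin A hnonneg hconn deg hdeg hdegpos (insert u T) (Finset.insert_nonempty u T)
    (fun i => HT W i - HT (insert u W) i - (HT T i - HT (insert u T) i))
    (fun i hi => by
      rcases Finset.mem_insert.1 hi with h' | hiT
      · rw [h', hHT0 (insert u W) (Finset.insert_nonempty u W) u (Finset.mem_insert_self u W),
          hHT0 (insert u T) (Finset.insert_nonempty u T) u (Finset.mem_insert_self u T)]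
        have := hmono W T hW hWT u
        linarith
      · rw [hHT0 T hT i hiT,
          hHT0 (insert u T) (Finset.insert_nonempty u T) i (Finset.mem_insert_of_mem hiT)]
        have := hmono W (insert u W) hW hiWu i
        linarith)
    (fun i hi => by
      have hiu : i ≠ u := fun h => hi (h ▸ Finset.mem_insert_self u T)
      have hiT : i ∉ T := fun h => hi (Finset.mem_insert_of_mem h)
      have hiW : i ∉ W := fun h => hiT (hWT h)
      have hiuW : i ∉ insert u W := by
        intro h
        rcases Finset.mem_insert.1 h with h' | h'
        · exact hiu h'
        · exact hiW h'
      rw [hHTrec W hW i hiW, hHTrec (insert u W) (Finset.insert_nonempty u W) i hiuW,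
        hHTrec T hT i hiT, hHTrec (insert u T) (Finset.insert_nonempty u T) i hi]
      simp only [mul_sub]
      rw [Finset.sum_sub_distrib, Finset.sum_sub_distrib, Finset.sum_sub_distrib]
      ring)
  intro i
  have := h i
  linarith

end

section
variable {n : ℕ} (A : Matrix (Fin n) (Fin n) ℝ)
  (deg : Fin n → ℝ) (pi' : Fin n → ℝ)
  (HT : Finset (Fin n) → Fin n → ℝ)
  (hpnn : ∀ i, 0 ≤ pi' i)
  (hmono : ∀ (W W' : Finset (Fin n)), W.Nonempty → W ⊆ W' → ∀ i, HT W' i ≤ HT W i)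
  (hsup : ∀ (W T : Finset (Fin n)), W.Nonempty → W ⊆ T → ∀ u ∉ T,
    ∀ i, HT T i - HT (insert u T) i ≤ HT W i - HT (insert u W) i)

include hpnn hmono in
lemma gwc_mono (W W' : Finset (Fin n)) (hW : W.Nonempty) (hWW' : W ⊆ W') :
    gwcH n pi' HT W' ≤ gwcH n pi' HT W := by
  apply Finset.sum_le_sum
  intro i _
  exact mul_le_mul_of_nonneg_left (hmono W W' hW hWW' i) (hpnn i)

include hpnn hsup in
lemma gwc_supermod (W T : Finset (Fin n)) (hW : W.Nonempty) (hWT : W ⊆ T)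
    (u : Fin n) (hu : u ∉ T) :
    gwcH n pi' HT T - gwcH n pi' HT (insert u T)
      ≤ gwcH n pi' HT W - gwcH n pi' HT (insert u W) := by
  have h : ∑ i, pi' i * (HT T i - HT (insert u T) i)
      ≤ ∑ i, pi' i * (HT W i - HT (insert u W) i) := by
    apply Finset.sum_le_sum
    intro i _
    exact mul_le_mul_of_nonneg_left (hsup W T hW hWT u hu i) (hpnn i)
  simp only [mul_sub, Finset.sum_sub_distrib] at h
  unfold gwcH
  linarith

include hpnn hsup in
lemma gwc_union_le (W : Finset (Fin n)) (hW : W.Nonempty) (B : Finset (Fin n)) :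
    gwcH n pi' HT W - gwcH n pi' HT (W ∪ B)
      ≤ ∑ u ∈ B \ W, (gwcH n pi' HT W - gwcH n pi' HT (insert u W)) := by
  induction B using Finset.induction_on with
  | empty => simp
  | @insert a B ha ih =>
    rw [Finset.union_insert]
    by_cases haW : a ∈ W
    · rw [Finset.insert_sdiff_of_mem _ haW]
      rw [Finset.insert_eq_self.2 (Finset.mem_union_left B haW)]
      exact ih
    · rw [Finset.insert_sdiff_of_notMem _ haW]
      have haB : a ∉ B \ W := fun h => ha (Finset.mem_sdiff.1 h).1
      rw [Finset.sum_insert haB]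
      have hstep := gwc_supermod pi' HT hpnn hsup W (W ∪ B) hW
        (Finset.subset_union_left) a
        (fun h => (Finset.mem_union.1 h).elim haW ha)
      linarith
end

/-- For a connected weighted undirected graph and `k ≥ 2`, the greedy sequence
`S_1 = {u*}` (with `u*` minimizing `H({u})`) and `S_i = S_{i−1} ∪ {argmax marginal gain}`
satisfies `H({u*}) − H(S_k) ≥ (1 − (k/(k−1))·(1/e)) · (H({u*}) − H(S*))`, where
`S* = argmin_{|S|=k} H(S)`.  Group hitting times `HT S i = H_{iS}` are characterized by
vanishing on `S` and the first-step recurrence. -/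
theorem greedy_gwc_guarantee
    (n : ℕ) (hn : 0 < n)
    (A : Matrix (Fin n) (Fin n) ℝ)
    (hsym : A.IsSymm)
    (hnonneg : ∀ i j, 0 ≤ A i j)
    (hloop : ∀ i, A i i = 0)
    (hconn : ∀ i j : Fin n, ∃ p : ℕ, (A ^ p) i j ≠ 0)
    (deg : Fin n → ℝ) (hdeg : ∀ i, deg i = ∑ j, A i j)
    (d : ℝ) (hd : d = ∑ i, deg i)
    (pi' : Fin n → ℝ) (hpi : ∀ i, pi' i = deg i / d)
    (HT : Finset (Fin n) → Fin n → ℝ)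
    (hHT0 : ∀ W : Finset (Fin n), W.Nonempty → ∀ i ∈ W, HT W i = 0)
    (hHTrec : ∀ W : Finset (Fin n), W.Nonempty → ∀ i, i ∉ W →
      HT W i = 1 + ∑ l, (A i l / deg i) * HT W l)
    (k : ℕ) (hk : 2 ≤ k)
    (ustar : Fin n)
    (hustar : ∀ v : Fin n, gwcH n pi' HT {ustar} ≤ gwcH n pi' HT {v})
    (Sopt : Finset (Fin n)) (hSoptcard : Sopt.card = k)
    (hSoptmin : ∀ T : Finset (Fin n), T.card = k → gwcH n pi' HT Sopt ≤ gwcH n pi' HT T)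
    (Sseq : ℕ → Finset (Fin n))
    (hS1 : Sseq 1 = {ustar})
    (hgreedy : ∀ i, 1 ≤ i → i < k → ∃ u, u ∉ Sseq i ∧
      Sseq (i + 1) = insert u (Sseq i) ∧
      ∀ v, v ∉ Sseq i →
        gwcH n pi' HT (Sseq i) - gwcH n pi' HT (insert v (Sseq i))
          ≤ gwcH n pi' HT (Sseq i) - gwcH n pi' HT (insert u (Sseq i))) :
    (1 - ((k : ℝ) / ((k : ℝ) - 1)) * (1 / Real.exp 1)) *
        (gwcH n pi' HT {ustar} - gwcH n pi' HT Sopt)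
      ≤ gwcH n pi' HT {ustar} - gwcH n pi' HT (Sseq k) := by
  -- basic facts
  have hkn : k ≤ n := by
    have := Finset.card_le_univ Sopt
    rw [hSoptcard, Fintype.card_fin] at this
    exact this
  have hn2 : 2 ≤ n := le_trans hk hkn
  haveI : Nontrivial (Fin n) := Fin.nontrivial_iff_two_le.mpr hn2
  have hdegnn : ∀ i, 0 ≤ deg i := fun i => by
    rw [hdeg i]; exact Finset.sum_nonneg fun j _ => hnonneg i j
  have hdegpos : ∀ i, 0 < deg i := by
    intro i
    rcases (hdegnn i).lt_or_eq with h | h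
    · exact h
    · exfalso
      have hzero : ∀ j, A i j = 0 := by
        have h' : ∑ j, A i j = 0 := by rw [← hdeg i, ← h]
        intro j
        exact (Finset.sum_eq_zero_iff_of_nonneg (fun j _ => hnonneg i j)).1 h' j
          (Finset.mem_univ j)
      obtain ⟨j, hj⟩ := exists_ne i
      obtain ⟨p, hp⟩ := hconn i j
      cases p with
      | zero =>
        rw [pow_zero] at hp
        exact hp (Matrix.one_apply_ne (Ne.symm hj))
      | succ q =>
        apply hp
        rw [pow_succ', Matrix.mul_apply]
        apply Finset.sum_eq_zero
        intro l _
        rw [hzero l, zero_mul]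
  have hdpos : 0 < d := by
    rw [hd]
    exact Finset.sum_pos (fun i _ => hdegpos i) Finset.univ_nonempty
  have hpnn : ∀ i, 0 ≤ pi' i := fun i => by
    rw [hpi i]; exact div_nonneg (hdegnn i) hdpos.le
  have hptmono := gwc_HT_mono A deg HT hnonneg hconn hdeg hdegpos hHT0 hHTrec
  have hptsup := gwc_HT_supermod A deg HT hnonneg hconn hdeg hdegpos hHT0 hHTrec
  have hmono : ∀ (W W' : Finset (Fin n)), W.Nonempty → W ⊆ W' →
      gwcH n pi' HT W' ≤ gwcH n pi' HT W :=
    fun W W' h hs => gwc_mono pi' HT hpnn hptmono W W' h hs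
  have hSoptne : Sopt.Nonempty := by
    rw [← Finset.card_pos, hSoptcard]; omega
  have hkR : (1:ℝ) < (k:ℝ) := by exact_mod_cast (by omega : 1 < k)
  have hkpos : (0:ℝ) < (k:ℝ) := by linarith
  set r : ℝ := 1 - 1/(k:ℝ) with hr
  have hrpos : 0 < r := by
    rw [hr]
    have : 1/(k:ℝ) < 1 := by rw [div_lt_one hkpos]; linarith
    linarith
  -- greedy induction
  have key : ∀ j : ℕ, 1 + j ≤ k → (Sseq (1+j)).Nonempty ∧
      gwcH n pi' HT (Sseq (1+j)) - gwcH n pi' HT Sopt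
        ≤ r ^ j * (gwcH n pi' HT (Sseq 1) - gwcH n pi' HT Sopt) := by
    intro j
    induction j with
    | zero =>
      intro _
      constructor
      · rw [hS1]; exact Finset.singleton_nonempty _
      · simp
    | succ j ih =>
      intro hjk
      obtain ⟨hne, hgap⟩ := ih (by omega)
      obtain ⟨u, huS, hSsucc, hmax⟩ := hgreedy (1+j) (by omega) (by omega)
      have hadd : 1 + j + 1 = 1 + j + 1 := rfl
      have hne' : (Sseq (1+j+1)).Nonempty := by
        rw [hSsucc]; exact Finset.insert_nonempty _ _
      refine ⟨hne', ?_⟩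
      set S := Sseq (1+j) with hSdef
      set fS := gwcH n pi' HT S with hfS
      set fO := gwcH n pi' HT Sopt with hfO
      set δ := fS - gwcH n pi' HT (insert u S) with hδ
      have hδ0 : 0 ≤ δ := by
        have := hmono S (insert u S) hne (Finset.subset_insert u S)
        rw [hδ]; linarith
      have h1 : fS - fO ≤ fS - gwcH n pi' HT (S ∪ Sopt) := by
        have := hmono Sopt (S ∪ Sopt) hSoptne Finset.subset_union_right
        rw [hfO]; linarith
      have h2 := gwc_union_le pi' HT hpnn hptsup S hne Sopt
      have h3 : ∑ x ∈ Sopt \ S, (fS - gwcH n pi' HT (insert x S))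
          ≤ (Sopt \ S).card • δ := by
        apply Finset.sum_le_card_nsmul
        intro x hx
        rw [hδ]
        exact hmax x (Finset.mem_sdiff.1 hx).2
      have hcard : ((Sopt \ S).card : ℝ) ≤ (k:ℝ) := by
        have hc := Finset.card_le_card (Finset.sdiff_subset (s := Sopt) (t := S))
        rw [hSoptcard] at hc
        exact_mod_cast hc
      have hsm : ((Sopt \ S).card • δ : ℝ) = ((Sopt \ S).card : ℝ) * δ :=
        nsmul_eq_mul _ _
      have h4 : fS - fO ≤ (k:ℝ) * δ := by
        have h5 : ((Sopt \ S).card : ℝ) * δ ≤ (k:ℝ) * δ :=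
          mul_le_mul_of_nonneg_right hcard hδ0
        calc fS - fO ≤ fS - gwcH n pi' HT (S ∪ Sopt) := h1
          _ ≤ ∑ x ∈ Sopt \ S, (fS - gwcH n pi' HT (insert x S)) := h2
          _ ≤ ((Sopt \ S).card : ℝ) * δ := by rw [← hsm]; exact h3
          _ ≤ (k:ℝ) * δ := h5
      have h6 : (fS - fO) / (k:ℝ) ≤ δ := by
        rw [div_le_iff₀ hkpos]
        linarith [h4]
      have hgap' : gwcH n pi' HT (Sseq (1+j+1)) - fO ≤ r * (fS - fO) := by
        rw [hSsucc]
        have hrw : r * (fS - fO) = (fS - fO) - (fS - fO)/(k:ℝ) := by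
          rw [hr]; field_simp
        rw [hrw]
        have : gwcH n pi' HT (insert u S) = fS - δ := by rw [hδ]; ring
        rw [this]
        linarith
      calc gwcH n pi' HT (Sseq (1+j+1)) - fO ≤ r * (fS - fO) := hgap'
        _ ≤ r * (r ^ j * (gwcH n pi' HT (Sseq 1) - fO)) :=
            mul_le_mul_of_nonneg_left hgap hrpos.le
        _ = r ^ (j+1) * (gwcH n pi' HT (Sseq 1) - fO) := by ring
  -- gap1 nonneg
  have hgap1 : 0 ≤ gwcH n pi' HT {ustar} - gwcH n pi' HT Sopt := by
    obtain ⟨T, hT1, hTcard⟩ := Finset.exists_superset_card_eq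
      (s := ({ustar} : Finset (Fin n))) (n := k)
      (by rw [Finset.card_singleton]; omega)
      (by rw [Fintype.card_fin]; exact hkn)
    have h1 : gwcH n pi' HT T ≤ gwcH n pi' HT {ustar} :=
      hmono {ustar} T (Finset.singleton_nonempty _) hT1
    have h2 := hSoptmin T hTcard
    linarith
  -- analytic bound
  have hrk : r ^ (k-1) ≤ ((k:ℝ)/((k:ℝ)-1)) * (1/Real.exp 1) := by
    have hre : r ≤ Real.exp (-(1/(k:ℝ))) := by
      have := Real.add_one_le_exp (-(1/(k:ℝ)))
      rw [hr]; linarith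
    have hrk' : r ^ k ≤ Real.exp (-(1/(k:ℝ))) ^ k := pow_le_pow_left₀ hrpos.le hre k
    have hexp : Real.exp (-(1/(k:ℝ))) ^ k = Real.exp (-1) := by
      rw [← Real.exp_nat_mul]
      congr 1
      field_simp
    have hpow : r ^ k = r ^ (k-1) * r := by
      conv_lhs => rw [show k = (k-1)+1 by omega]
      rw [pow_succ]
    rw [hpow, hexp] at hrk'
    have hle := (le_div_iff₀ hrpos).2 hrk'
    have hr_eq : Real.exp (-1) / r = ((k:ℝ)/((k:ℝ)-1)) * (1/Real.exp 1) := by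
      rw [Real.exp_neg, hr]
      have he : Real.exp 1 ≠ 0 := (Real.exp_pos 1).ne'
      have hk1 : (k:ℝ) - 1 ≠ 0 := by linarith
      field_simp
    rw [hr_eq] at hle
    exact hle
  -- finish
  obtain ⟨-, hgapk⟩ := key (k-1) (by omega)
  rw [show 1 + (k-1) = k by omega] at hgapk
  rw [hS1] at hgapk
  have hfinal : gwcH n pi' HT (Sseq k) - gwcH n pi' HT Sopt
      ≤ ((k:ℝ)/((k:ℝ)-1)) * (1/Real.exp 1) *
        (gwcH n pi' HT {ustar} - gwcH n pi' HT Sopt) := by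
    calc gwcH n pi' HT (Sseq k) - gwcH n pi' HT Sopt
        ≤ r ^ (k-1) * (gwcH n pi' HT {ustar} - gwcH n pi' HT Sopt) := hgapk
      _ ≤ ((k:ℝ)/((k:ℝ)-1)) * (1/Real.exp 1) *
          (gwcH n pi' HT {ustar} - gwcH n pi' HT Sopt) :=
        mul_le_mul_of_nonneg_right hrk hgap1
  linarith
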